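/- Let n ≥ 2, let a_1,…,a_m be positive integers with a = a_1+⋯+a_m, and set N = n + a. Let w_1,…,w_m ∈ W_M (the subgroup of S_N generated by s_1,…,s_{n−1}) satisfy ℓ(w_1)+⋯+ℓ(w_m) = a. For each i set n_i := ∏_{k=1}^{a_i} (ε_n − ε_{n+k}) ∈ ℤ[ε_1,…,ε_N]. Then ∂_{w_m}(n_m·∂_{w_{m−1}}(n_{m−1}·⋯·∂_{w_1}(n_1)⋯)) = ∂_{w_m}(ε_n^{a_m}·∂_{w_{m−1}}(ε_n^{a_{m−1}}·⋯·∂_{w_1}(ε_n^{a_1})⋯)) in ℤ[ε_1,…,ε_N]. -/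

import Mathlib

open MvPolynomial

/-- The adjacent transposition swapping `i` and `i+1` (0-indexed). -/
def sT (n : ℕ) (i : ℕ) : Equiv.Perm (Fin n) :=
  if h : i + 1 < n then Equiv.swap ⟨i, Nat.lt_of_succ_lt h⟩ ⟨i + 1, h⟩ else 1

/-- Product of a word in the simple transpositions. -/
def wordProd (n : ℕ) (l : List ℕ) : Equiv.Perm (Fin n) := (l.map (sT n)).prod

/-- Number of inversions = Coxeter length. -/
def invLen {n : ℕ} (w : Equiv.Perm (Fin n)) : ℕ :=
  (Finset.univ.filter fun p : Fin n × Fin n => p.1 < p.2 ∧ w p.2 < w p.1).card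

open Classical in
/-- The divided difference operator. -/
noncomputable def dd (n : ℕ) (i : ℕ) (f : MvPolynomial (Fin n) ℤ) : MvPolynomial (Fin n) ℤ :=
  if h : i + 1 < n then
    if hd : ∃ g : MvPolynomial (Fin n) ℤ,
        f - rename (⇑(sT n i)) f = (X ⟨i, Nat.lt_of_succ_lt h⟩ - X ⟨i + 1, h⟩) * g
    then hd.choose else 0
  else 0

open Classical in
noncomputable def ddList (n : ℕ) : List ℕ → MvPolynomial (Fin n) ℤ → MvPolynomial (Fin n) ℤ
  | [], f => f
  | i :: t, f => dd n i (ddList n t f)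

def IsReducedWord (n : ℕ) (l : List ℕ) (w : Equiv.Perm (Fin n)) : Prop :=
  (∀ i ∈ l, i + 1 < n) ∧ wordProd n l = w ∧ l.length = invLen w

noncomputable def nest (n : ℕ) :
    List (List ℕ) → List (MvPolynomial (Fin n) ℤ) → MvPolynomial (Fin n) ℤ
  | [], _ => 1
  | _ :: _, [] => 1
  | l :: ls, g :: gs => ddList n l (g * nest n ls gs)

noncomputable def xv (n j : ℕ) : MvPolynomial (Fin n) ℤ := if h : j < n then X ⟨j, h⟩ else 0


/-- weight of a monomial: total degree in the first `n` variables. -/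
def wgt (n : ℕ) {N : ℕ} (m : Fin N →₀ ℕ) : ℕ := ∑ j : Fin N, if (j : ℕ) < n then m j else 0

lemma wgt_add {n N : ℕ} (m₁ m₂ : Fin N →₀ ℕ) : wgt n (m₁ + m₂) = wgt n m₁ + wgt n m₂ := by
  unfold wgt
  rw [← Finset.sum_add_distrib]
  refine Finset.sum_congr rfl fun j _ => ?_
  by_cases h : (j : ℕ) < n <;> simp [h]

lemma wgt_single {n N : ℕ} (j : Fin N) (a : ℕ) :
    wgt n (Finsupp.single j a) = if (j : ℕ) < n then a else 0 := by
  unfold wgt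
  rw [Finset.sum_eq_single j]
  · simp
  · intro k _ hk
    rw [Finsupp.single_eq_of_ne hk]
    simp
  · simp

lemma wgt_zero {n N : ℕ} : wgt n (0 : Fin N →₀ ℕ) = 0 := by simp [wgt]

/-- all monomials of `f` have weight `< d`. -/
def QZ (n : ℕ) {N : ℕ} (d : ℤ) (f : MvPolynomial (Fin N) ℤ) : Prop :=
  ∀ m ∈ f.support, (wgt n m : ℤ) < d

variable {n N : ℕ}

lemma qz_zero {d : ℤ} : QZ n d (0 : MvPolynomial (Fin N) ℤ) := by
  intro m hm; simp at hm

lemma qz_mono {d e : ℤ} {f : MvPolynomial (Fin N) ℤ} (hde : d ≤ e) (hf : QZ n d f) :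
    QZ n e f := fun m hm => lt_of_lt_of_le (hf m hm) hde

lemma qz_eq_zero {d : ℤ} {f : MvPolynomial (Fin N) ℤ} (hf : QZ n d f) (hd : d ≤ 0) : f = 0 := by
  by_contra h
  obtain ⟨m, hm⟩ := MvPolynomial.support_nonempty.mpr h
  have := hf m hm
  have : (0 : ℤ) ≤ (wgt n m : ℤ) := Int.natCast_nonneg _
  omega

lemma qz_add {d : ℤ} {f g : MvPolynomial (Fin N) ℤ} (hf : QZ n d f) (hg : QZ n d g) :
    QZ n d (f + g) := by
  intro m hm
  rcases Finset.mem_union.mp (MvPolynomial.support_add hm) with h | h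
  · exact hf m h
  · exact hg m h

lemma qz_neg {d : ℤ} {f : MvPolynomial (Fin N) ℤ} (hf : QZ n d f) : QZ n d (-f) := by
  intro m hm
  rw [MvPolynomial.support_neg] at hm
  exact hf m hm

lemma qz_sub {d : ℤ} {f g : MvPolynomial (Fin N) ℤ} (hf : QZ n d f) (hg : QZ n d g) :
    QZ n d (f - g) := by
  rw [sub_eq_add_neg]; exact qz_add hf (qz_neg hg)

lemma qz_sum {d : ℤ} {α : Type*} {s : Finset α} {F : α → MvPolynomial (Fin N) ℤ}
    (h : ∀ a ∈ s, QZ n d (F a)) : QZ n d (∑ a ∈ s, F a) := by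
  classical
  induction s using Finset.cons_induction with
  | empty => simpa using (qz_zero : QZ n d (0 : MvPolynomial (Fin N) ℤ))
  | cons a s ha ih =>
    rw [Finset.sum_cons]
    exact qz_add (h a (Finset.mem_cons_self a s)) (ih fun b hb => h b (Finset.mem_cons.mpr (Or.inr hb)))

lemma qz_mul {d₁ d₂ : ℤ} {f g : MvPolynomial (Fin N) ℤ} (hf : QZ n d₁ f) (hg : QZ n d₂ g) :
    QZ n (d₁ + d₂ - 1) (f * g) := by
  intro m hm
  classical
  have := MvPolynomial.support_mul f g hm
  rw [Finset.mem_add] at this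
  obtain ⟨m₁, hm₁, m₂, hm₂, rfl⟩ := this
  have h1 := hf m₁ hm₁
  have h2 := hg m₂ hm₂
  rw [wgt_add]
  push_cast
  omega

lemma qz_monomial {d : ℤ} {m : Fin N →₀ ℕ} {c : ℤ} (h : (wgt n m : ℤ) < d) :
    QZ n d (monomial m c) := by
  classical
  intro m' hm'
  rw [MvPolynomial.support_monomial] at hm'
  split at hm'
  · simp at hm'
  · rw [Finset.mem_singleton] at hm'; subst hm'; exact h

lemma qz_one : QZ n 1 (1 : MvPolynomial (Fin N) ℤ) := by
  have : (1 : MvPolynomial (Fin N) ℤ) = monomial 0 1 := by simp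
  rw [this]
  exact qz_monomial (by simp [wgt_zero])

lemma qz_X {j : Fin N} : QZ n 2 (X j : MvPolynomial (Fin N) ℤ) := by
  intro m hm
  rw [MvPolynomial.support_X, Finset.mem_singleton] at hm
  subst hm
  rw [wgt_single]
  split <;> norm_num

lemma qz_X0 {j : Fin N} (hj : n ≤ (j : ℕ)) : QZ n 1 (X j : MvPolynomial (Fin N) ℤ) := by
  intro m hm
  rw [MvPolynomial.support_X, Finset.mem_singleton] at hm
  subst hm
  rw [wgt_single, if_neg (by omega)]
  norm_num

lemma qz_pow' {k : ℤ} {f : MvPolynomial (Fin N) ℤ} (hf : QZ n (k + 1) f) (a : ℕ) :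
    QZ n (a * k + 1) (f ^ a) := by
  induction a with
  | zero => simpa using (qz_one : QZ n 1 (1 : MvPolynomial (Fin N) ℤ))
  | succ a ih =>
    have := qz_mul ih hf
    refine qz_mono (le_of_eq ?_) this
    push_cast; ring

lemma qz_pow {f : MvPolynomial (Fin N) ℤ} (hf : QZ n 2 f) (a : ℕ) :
    QZ n ((a : ℤ) + 1) (f ^ a) := by
  have hf' : QZ n ((1 : ℤ) + 1) f := by norm_num; exact hf
  have := qz_pow' hf' a
  simpa using this

lemma qz_self (f : MvPolynomial (Fin N) ℤ) : QZ n (((f.support.sup (wgt n) : ℕ) : ℤ) + 1) f := by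
  intro m hm
  have := Finset.le_sup (f := wgt n) hm
  omega

lemma qz_prod_sub_pow {x : MvPolynomial (Fin N) ℤ} (hx : QZ n 2 x)
    {y : ℕ → MvPolynomial (Fin N) ℤ} (hy : ∀ k, QZ n 1 (y k)) (a : ℕ) :
    QZ n (a : ℤ) (∏ k ∈ Finset.range a, (x - y k) - x ^ a) := by
  induction a with
  | zero => simpa using (qz_zero : QZ n 0 (0 : MvPolynomial (Fin N) ℤ))
  | succ a ih =>
    have key : ∏ k ∈ Finset.range (a + 1), (x - y k) - x ^ (a + 1) =
        (∏ k ∈ Finset.range a, (x - y k) - x ^ a) * x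
        - (∏ k ∈ Finset.range a, (x - y k) - x ^ a) * y a - x ^ a * y a := by
      rw [Finset.prod_range_succ]; ring
    rw [key]
    have h1 : QZ n ((a : ℤ) + 1) ((∏ k ∈ Finset.range a, (x - y k) - x ^ a) * x) := by
      have := qz_mul ih hx
      exact qz_mono (by omega) this
    have h2 : QZ n ((a : ℤ) + 1) ((∏ k ∈ Finset.range a, (x - y k) - x ^ a) * y a) := by
      have := qz_mul ih (hy a)
      exact qz_mono (by omega) this
    have h3 : QZ n ((a : ℤ) + 1) (x ^ a * y a) := by
      have := qz_mul (qz_pow hx a) (hy a)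
      exact qz_mono (by omega) this
    have := qz_sub (qz_sub h1 h2) h3
    exact qz_mono (by push_cast; omega) this
section SecB
variable {n N : ℕ}

lemma pow_diff_aux (x y : Fin N) (hx : (x : ℕ) < n) (hy : (y : ℕ) < n) (b c : ℕ) :
    ∃ h : MvPolynomial (Fin N) ℤ,
      (X x : MvPolynomial (Fin N) ℤ) ^ (b + c) * X y ^ b - X x ^ b * X y ^ (b + c)
        = (X x - X y) * h ∧ QZ n ((b + c : ℕ) + b) h := by
  refine ⟨(X x * X y) ^ b * ∑ t ∈ Finset.range c, X x ^ t * X y ^ (c - 1 - t), ?_, ?_⟩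
  · have hg := geom_sum₂_mul (X x : MvPolynomial (Fin N) ℤ) (X y) c
    linear_combination (-((X x * X y : MvPolynomial (Fin N) ℤ) ^ b)) * hg
  · have h1 : QZ n ((b : ℤ) * 2 + 1) ((X x * X y : MvPolynomial (Fin N) ℤ) ^ b) := by
      have hxy : QZ n (2 + 2 - 1) ((X x : MvPolynomial (Fin N) ℤ) * X y) := qz_mul qz_X qz_X
      have hxy' : QZ n (2 + 1) ((X x : MvPolynomial (Fin N) ℤ) * X y) := by norm_num at hxy ⊢; exact hxy
      exact qz_pow' hxy' b
    have h2 : QZ n (c : ℤ) (∑ t ∈ Finset.range c, (X x : MvPolynomial (Fin N) ℤ) ^ t * X y ^ (c - 1 - t)) := by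
      refine qz_sum fun t ht => ?_
      rw [Finset.mem_range] at ht
      have := qz_mul (qz_pow (qz_X (n := n) (j := x)) t) (qz_pow (qz_X (n := n) (j := y)) (c - 1 - t))
      exact qz_mono (by push_cast; omega) this
    have := qz_mul h1 h2
    exact qz_mono (by push_cast; omega) this

lemma pow_diff (x y : Fin N) (hx : (x : ℕ) < n) (hy : (y : ℕ) < n) (a b : ℕ) :
    ∃ h : MvPolynomial (Fin N) ℤ,
      (X x : MvPolynomial (Fin N) ℤ) ^ a * X y ^ b - X x ^ b * X y ^ a
        = (X x - X y) * h ∧ QZ n ((a : ℤ) + b) h := by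
  rcases le_total b a with hab | hab
  · obtain ⟨c, rfl⟩ : ∃ c, a = b + c := ⟨a - b, by omega⟩
    obtain ⟨h, hid, hq⟩ := pow_diff_aux (n := n) x y hx hy b c
    exact ⟨h, hid, qz_mono (by push_cast; omega) hq⟩
  · obtain ⟨c, rfl⟩ : ∃ c, b = a + c := ⟨b - a, by omega⟩
    obtain ⟨h, hid, hq⟩ := pow_diff_aux (n := n) x y hx hy a c
    refine ⟨-h, by linear_combination -hid, qz_mono (by push_cast; omega) (qz_neg hq)⟩

lemma mapDomain_swap_eq (x y : Fin N) (r : Fin N →₀ ℕ) (hx : r x = 0) (hy : r y = 0) :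
    Finsupp.mapDomain ⇑(Equiv.swap x y) r = r := by
  rw [← Finsupp.equivMapDomain_eq_mapDomain]
  ext j
  rw [Finsupp.equivMapDomain_apply]
  rcases eq_or_ne j x with rfl | hjx
  · rw [Equiv.symm_swap, Equiv.swap_apply_left, hx, hy]
  rcases eq_or_ne j y with rfl | hjy
  · rw [Equiv.symm_swap, Equiv.swap_apply_right, hx, hy]
  · rw [Equiv.symm_swap, Equiv.swap_apply_of_ne_of_ne hjx hjy]

lemma mono_witness (x y : Fin N) (hxy : x ≠ y) (hx : (x : ℕ) < n) (hy : (y : ℕ) < n)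
    (m : Fin N →₀ ℕ) (c : ℤ) :
    ∃ g : MvPolynomial (Fin N) ℤ,
      monomial m c - rename ⇑(Equiv.swap x y) (monomial m c) = (X x - X y) * g
        ∧ QZ n (wgt n m : ℤ) g := by
  classical
  set a := m x with ha
  set b := m y with hb
  set r := (m.erase x).erase y with hr
  have hrx : r x = 0 := by
    rw [hr, Finsupp.erase_ne hxy, Finsupp.erase_same]
  have hry : r y = 0 := by rw [hr, Finsupp.erase_same]
  have hm : m = r + Finsupp.single x a + Finsupp.single y b := by
    ext j
    rcases eq_or_ne j x with rfl | hjx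
    · simp [hrx, Finsupp.single_apply, hxy, Ne.symm hxy, ha]
    rcases eq_or_ne j y with rfl | hjy
    · simp [hry, Finsupp.single_apply, hxy, Ne.symm hxy, hb]
    · simp [hr, Finsupp.erase_ne hjy, Finsupp.erase_ne hjx,
        Finsupp.single_apply, Ne.symm hjx, Ne.symm hjy]
  have hmap : Finsupp.mapDomain ⇑(Equiv.swap x y) m = r + Finsupp.single x b + Finsupp.single y a := by
    rw [hm, Finsupp.mapDomain_add, Finsupp.mapDomain_add, Finsupp.mapDomain_single,
      Finsupp.mapDomain_single, mapDomain_swap_eq x y r hrx hry,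
      Equiv.swap_apply_left, Equiv.swap_apply_right]
    abel
  have hmono : (monomial m c : MvPolynomial (Fin N) ℤ) = monomial r c * X x ^ a * X y ^ b := by
    rw [X_pow_eq_monomial, X_pow_eq_monomial, monomial_mul, monomial_mul, mul_one, mul_one]
    rw [hm]
  have hmono2 : (rename ⇑(Equiv.swap x y) (monomial m c) : MvPolynomial (Fin N) ℤ)
      = monomial r c * X x ^ b * X y ^ a := by
    rw [rename_monomial, hmap, X_pow_eq_monomial, X_pow_eq_monomial, monomial_mul, monomial_mul,
      mul_one, mul_one]
  obtain ⟨h, hid, hq⟩ := pow_diff (n := n) x y hx hy a b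
  refine ⟨monomial r c * h, ?_, ?_⟩
  · rw [hmono2, hmono]
    linear_combination (monomial r c : MvPolynomial (Fin N) ℤ) * hid
  · have hqr : QZ n ((wgt n r : ℕ) + 1 : ℤ) (monomial r c : MvPolynomial (Fin N) ℤ) :=
      qz_monomial (by push_cast; omega)
    have := qz_mul hqr hq
    have hwm : wgt n m = wgt n r + a + b := by
      rw [hm, wgt_add, wgt_add, wgt_single, wgt_single, if_pos hx, if_pos hy]
    rw [hwm]
    exact qz_mono (by push_cast; omega) this

lemma sub_rename_sum (σ : Fin N → Fin N) (f : MvPolynomial (Fin N) ℤ) :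
    f - rename σ f
      = ∑ m ∈ f.support, (monomial m (coeff m f) - rename σ (monomial m (coeff m f))) := by
  rw [Finset.sum_sub_distrib, ← map_sum, support_sum_monomial_coeff]

lemma exists_witness {i : ℕ} (hin : i + 1 < n) (hnN : n ≤ N) (d : ℤ)
    (f : MvPolynomial (Fin N) ℤ) (hf : QZ n d f) :
    ∃ g : MvPolynomial (Fin N) ℤ,
      f - rename ⇑(sT N i) f
        = (X ⟨i, Nat.lt_of_succ_lt (lt_of_lt_of_le hin hnN)⟩ - X ⟨i + 1, lt_of_lt_of_le hin hnN⟩) * g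
        ∧ QZ n (d - 1) g := by
  classical
  have hiN : i + 1 < N := lt_of_lt_of_le hin hnN
  set x : Fin N := ⟨i, Nat.lt_of_succ_lt hiN⟩
  set y : Fin N := ⟨i + 1, hiN⟩
  have hxy : x ≠ y := by simp [x, y, Fin.ext_iff]
  have hxn : (x : ℕ) < n := by simp [x]; omega
  have hyn : (y : ℕ) < n := by simp [y]; omega
  have hσ : sT N i = Equiv.swap x y := by unfold sT; rw [dif_pos hiN]
  refine ⟨∑ m ∈ f.support, (mono_witness (n := n) x y hxy hxn hyn m (coeff m f)).choose, ?_, ?_⟩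
  · rw [hσ, sub_rename_sum, Finset.mul_sum]
    refine Finset.sum_congr rfl fun m hm => ?_
    exact (mono_witness (n := n) x y hxy hxn hyn m (coeff m f)).choose_spec.1
  · refine qz_sum fun m hm => ?_
    have hq := (mono_witness (n := n) x y hxy hxn hyn m (coeff m f)).choose_spec.2
    exact qz_mono (by have := hf m hm; omega) hq

lemma dd_eq {i : ℕ} (h : i + 1 < N) {f g : MvPolynomial (Fin N) ℤ}
    (hg : f - rename ⇑(sT N i) f = (X ⟨i, Nat.lt_of_succ_lt h⟩ - X ⟨i + 1, h⟩) * g) :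
    dd N i f = g := by
  classical
  have hex : ∃ g' : MvPolynomial (Fin N) ℤ,
      f - rename ⇑(sT N i) f = (X ⟨i, Nat.lt_of_succ_lt h⟩ - X ⟨i + 1, h⟩) * g' := ⟨g, hg⟩
  unfold dd
  rw [dif_pos h, dif_pos hex]
  have hspec := hex.choose_spec
  have hne : (X ⟨i, Nat.lt_of_succ_lt h⟩ - X ⟨i + 1, h⟩ : MvPolynomial (Fin N) ℤ) ≠ 0 := by
    refine sub_ne_zero_of_ne fun hc => ?_
    have := MvPolynomial.X_injective (R := ℤ) hc
    simp [Fin.ext_iff] at this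
  exact mul_left_cancel₀ hne (hspec.symm.trans hg)

lemma qz_dd {i : ℕ} (hin : i + 1 < n) (hnN : n ≤ N) {d : ℤ} {f : MvPolynomial (Fin N) ℤ}
    (hf : QZ n d f) : QZ n (d - 1) (dd N i f) := by
  obtain ⟨g, hid, hq⟩ := exists_witness hin hnN d f hf
  rw [dd_eq (lt_of_lt_of_le hin hnN) hid]
  exact hq

lemma dd_sub {i : ℕ} (hin : i + 1 < n) (hnN : n ≤ N) (f g : MvPolynomial (Fin N) ℤ) :
    dd N i (f - g) = dd N i f - dd N i g := by
  obtain ⟨gf, hidf, -⟩ := exists_witness hin hnN _ f (qz_self f)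
  obtain ⟨gg, hidg, -⟩ := exists_witness hin hnN _ g (qz_self g)
  have hiN : i + 1 < N := lt_of_lt_of_le hin hnN
  rw [dd_eq hiN hidf, dd_eq hiN hidg]
  refine dd_eq hiN ?_
  rw [map_sub]
  linear_combination hidf - hidg

lemma qz_ddList {l : List ℕ} (hl : ∀ i ∈ l, i + 1 < n) (hnN : n ≤ N) {d : ℤ}
    {f : MvPolynomial (Fin N) ℤ} (hf : QZ n d f) :
    QZ n (d - l.length) (ddList N l f) := by
  induction l with
  | nil => simpa [ddList] using hf
  | cons i t ih =>
    have h1 := qz_dd (hl i (List.mem_cons_self)) hnN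
      (ih fun j hj => hl j (List.mem_cons_of_mem i hj))
    refine qz_mono (le_of_eq ?_) (by simpa [ddList] using h1)
    push_cast [List.length_cons]; ring

lemma ddList_sub {l : List ℕ} (hl : ∀ i ∈ l, i + 1 < n) (hnN : n ≤ N)
    (f g : MvPolynomial (Fin N) ℤ) :
    ddList N l (f - g) = ddList N l f - ddList N l g := by
  induction l with
  | nil => simp [ddList]
  | cons i t ih =>
    simp only [ddList]
    rw [ih fun j hj => hl j (List.mem_cons_of_mem i hj),
      dd_sub (hl i (List.mem_cons_self)) hnN]
end SecB
section SecC
variable {n N : ℕ}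

lemma ML (hnN : n ≤ N) (x : MvPolynomial (Fin N) ℤ) (hx : QZ n 2 x)
    (y : ℕ → MvPolynomial (Fin N) ℤ) (hy : ∀ k, QZ n 1 (y k)) :
    ∀ (ls : List (List ℕ)) (asL : List ℕ), ls.length = asL.length →
      (∀ l ∈ ls, ∀ i ∈ l, i + 1 < n) →
      QZ n ((asL.sum : ℤ) - ((ls.map List.length).sum : ℤ) + 1)
        (nest N ls (asL.map fun a => ∏ k ∈ Finset.range a, (x - y k))) ∧
      QZ n ((asL.sum : ℤ) - ((ls.map List.length).sum : ℤ) + 1)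
        (nest N ls (asL.map fun a => x ^ a)) ∧
      QZ n ((asL.sum : ℤ) - ((ls.map List.length).sum : ℤ))
        (nest N ls (asL.map fun a => ∏ k ∈ Finset.range a, (x - y k))
          - nest N ls (asL.map fun a => x ^ a)) := by
  intro ls
  induction ls with
  | nil =>
    intro asL hlen _
    have : asL = [] := List.length_eq_zero_iff.mp hlen.symm
    subst this
    simp only [nest, List.map_nil, List.sum_nil, Nat.cast_zero, sub_zero, zero_add, sub_self]
    exact ⟨qz_one, qz_one, qz_zero⟩
  | cons l ls' IH =>
    intro asL hlen hfine
    obtain ⟨a, as', rfl⟩ : ∃ a as', asL = a :: as' := by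
      cases asL with
      | nil => simp at hlen
      | cons a as' => exact ⟨a, as', rfl⟩
    obtain ⟨h1, h2, h3⟩ := IH as' (by simpa using hlen)
      (fun l' hl' => hfine l' (List.mem_cons_of_mem l hl'))
    have hl : ∀ i ∈ l, i + 1 < n := hfine l (List.mem_cons_self)
    set T₁ := nest N ls' (as'.map fun a => ∏ k ∈ Finset.range a, (x - y k)) with hT₁
    set T₂ := nest N ls' (as'.map fun a => x ^ a) with hT₂
    have hnest₁ : nest N (l :: ls') ((a :: as').map fun a => ∏ k ∈ Finset.range a, (x - y k))
        = ddList N l ((∏ k ∈ Finset.range a, (x - y k)) * T₁) := by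
      simp [nest, hT₁]
    have hnest₂ : nest N (l :: ls') ((a :: as').map fun a => x ^ a)
        = ddList N l (x ^ a * T₂) := by
      simp [nest, hT₂]
    have hE : QZ n (a : ℤ) (∏ k ∈ Finset.range a, (x - y k) - x ^ a) :=
      qz_prod_sub_pow hx hy a
    have hF1 : QZ n ((a : ℤ) + 1) (∏ k ∈ Finset.range a, (x - y k)) := by
      have := qz_add (qz_mono (by omega) hE) (qz_pow hx a)
      simpa using this
    have hF2 : QZ n ((a : ℤ) + 1) (x ^ a) := qz_pow hx a
    set A' : ℤ := (as'.sum : ℤ) with hA'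
    set L' : ℤ := ((ls'.map List.length).sum : ℤ) with hL'
    have hbig : ((a :: as').sum : ℤ) - (((l :: ls').map List.length).sum : ℤ)
        = (a : ℤ) + A' - ((l.length : ℤ) + L') := by
      simp only [hA', hL', List.map_cons, List.sum_cons]; push_cast; ring
    refine ⟨?_, ?_, ?_⟩
    · rw [hnest₁]
      have hin : QZ n ((a : ℤ) + (A' - L' + 1) + 1 - 1) ((∏ k ∈ Finset.range a, (x - y k)) * T₁) := by
        have := qz_mul hF1 h1
        exact qz_mono (by ring_nf; omega) this
      have := qz_ddList hl hnN hin
      exact qz_mono (by rw [hbig]; omega) this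
    · rw [hnest₂]
      have hin : QZ n ((a : ℤ) + (A' - L' + 1) + 1 - 1) (x ^ a * T₂) := by
        have := qz_mul hF2 h2
        exact qz_mono (by ring_nf; omega) this
      have := qz_ddList hl hnN hin
      exact qz_mono (by rw [hbig]; omega) this
    · rw [hnest₁, hnest₂, ← ddList_sub hl hnN]
      have hinner : QZ n ((a : ℤ) + (A' - L'))
          ((∏ k ∈ Finset.range a, (x - y k)) * T₁ - x ^ a * T₂) := by
        have heq : (∏ k ∈ Finset.range a, (x - y k)) * T₁ - x ^ a * T₂
            = (∏ k ∈ Finset.range a, (x - y k) - x ^ a) * T₁ + x ^ a * (T₁ - T₂) := by ring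
        rw [heq]
        have hA := qz_mul hE h1
        have hB := qz_mul hF2 h3
        exact qz_add (qz_mono (by omega) hA) (qz_mono (by omega) hB)
      have := qz_ddList hl hnN hinner
      exact qz_mono (by rw [hbig]; omega) this
end SecC
section SecD
variable {n N : ℕ}

lemma swap_val {i : ℕ} (h : i + 1 < N) (u : Fin N) :
    ((Equiv.swap (⟨i, Nat.lt_of_succ_lt h⟩ : Fin N) ⟨i + 1, h⟩ u : Fin N) : ℕ)
      = if (u : ℕ) = i then i + 1 else if (u : ℕ) = i + 1 then i else (u : ℕ) := by
  rcases u with ⟨u, hu⟩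
  rw [Equiv.swap_apply_def]
  split_ifs with h1 h2 h3 h4 h5 h6 <;> simp_all [Fin.ext_iff] <;> omega

lemma key_order {i : ℕ} (h : i + 1 < N) (u v : Fin N) (huv : u < v) :
    Equiv.swap (⟨i, Nat.lt_of_succ_lt h⟩ : Fin N) ⟨i + 1, h⟩ u
        < Equiv.swap (⟨i, Nat.lt_of_succ_lt h⟩ : Fin N) ⟨i + 1, h⟩ v
      ↔ ¬(u = ⟨i, Nat.lt_of_succ_lt h⟩ ∧ v = ⟨i + 1, h⟩) := by
  rw [Fin.lt_def] at huv
  rw [Fin.lt_def, swap_val h u, swap_val h v]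
  constructor
  · rintro hlt ⟨rfl, rfl⟩
    simp only [Fin.val_mk] at hlt
    split_ifs at hlt <;> omega
  · intro hne
    have hne' : ¬((u : ℕ) = i ∧ (v : ℕ) = i + 1) := by
      intro ⟨h1, h2⟩
      exact hne ⟨Fin.ext h1, Fin.ext h2⟩
    split_ifs <;> omega

lemma step_A {i : ℕ} (h : i + 1 < N) (w : Equiv.Perm (Fin N))
    (hlt : w⁻¹ ⟨i, Nat.lt_of_succ_lt h⟩ < w⁻¹ ⟨i + 1, h⟩) :
    invLen (Equiv.swap (⟨i, Nat.lt_of_succ_lt h⟩ : Fin N) ⟨i + 1, h⟩ * w) = invLen w + 1 := by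
  classical
  set x : Fin N := ⟨i, Nat.lt_of_succ_lt h⟩ with hxdef
  set y : Fin N := ⟨i + 1, h⟩ with hydef
  set s := Equiv.swap x y with hsdef
  set e : Fin N × Fin N := (w⁻¹ x, w⁻¹ y) with hedef
  have hxy : x < y := by rw [Fin.lt_def]; simp [hxdef, hydef]
  have hset : (Finset.univ.filter fun p : Fin N × Fin N => p.1 < p.2 ∧ (s * w) p.2 < (s * w) p.1)
      = insert e (Finset.univ.filter fun p : Fin N × Fin N => p.1 < p.2 ∧ w p.2 < w p.1) := by
    ext p
    rw [Finset.mem_insert, Finset.mem_filter, Finset.mem_filter]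
    simp only [Finset.mem_insert, Finset.mem_filter, Finset.mem_univ, true_and,
      Equiv.Perm.mul_apply]
    constructor
    · rintro ⟨hp, hs⟩
      by_cases hew : w p.2 < w p.1
      · right; exact ⟨hp, hew⟩
      · left
        have hne : w p.1 ≠ w p.2 := fun hc => (ne_of_lt hp) (w.injective hc)
        have hw12 : w p.1 < w p.2 := lt_of_le_of_ne (not_lt.mp hew) hne
        have hk := key_order h (w p.1) (w p.2) hw12
        have : ¬ (s (w p.1) < s (w p.2)) := fun hc => lt_asymm hc hs
        have heq : w p.1 = x ∧ w p.2 = y := by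
          by_contra hcon
          exact this (hk.mpr hcon)
        have hp1 : p.1 = w⁻¹ x := by rw [← heq.1]; simp
        have hp2 : p.2 = w⁻¹ y := by rw [← heq.2]; simp
        rw [hedef]
        exact Prod.ext hp1 hp2
    · rintro (rfl | ⟨hp, hw⟩)
      · refine ⟨hlt, ?_⟩
        simp only [hedef]
        rw [Equiv.Perm.coe_inv, Equiv.apply_symm_apply, Equiv.apply_symm_apply]
        rw [hsdef, Equiv.swap_apply_left, Equiv.swap_apply_right]
        exact hxy
      · refine ⟨hp, ?_⟩
        have hk := key_order h (w p.2) (w p.1) hw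
        refine hk.mpr ?_
        rintro ⟨h2, h1⟩
        have h1' : w p.1 = y := by rw [hydef]; exact h1
        have h2' : w p.2 = x := by rw [hxdef]; exact h2
        have hp1 : p.1 = w⁻¹ y := by rw [← h1']; simp
        have hp2 : p.2 = w⁻¹ x := by rw [← h2']; simp
        rw [hp1, hp2] at hp
        exact lt_asymm hp hlt
  have hnot : e ∉ (Finset.univ.filter fun p : Fin N × Fin N => p.1 < p.2 ∧ w p.2 < w p.1) := by
    simp only [Finset.mem_filter, Finset.mem_univ, true_and, hedef]
    rintro ⟨-, hcon⟩
    rw [Equiv.Perm.coe_inv, Equiv.apply_symm_apply, Equiv.apply_symm_apply] at hcon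
    exact lt_asymm hcon hxy
  unfold invLen
  rw [hset, Finset.card_insert_of_notMem hnot]

lemma step_dichotomy {i : ℕ} (h : i + 1 < N) (w : Equiv.Perm (Fin N)) :
    (w⁻¹ ⟨i, Nat.lt_of_succ_lt h⟩ < w⁻¹ ⟨i + 1, h⟩ ∧
      invLen (Equiv.swap (⟨i, Nat.lt_of_succ_lt h⟩ : Fin N) ⟨i + 1, h⟩ * w) = invLen w + 1) ∨
    (w⁻¹ ⟨i + 1, h⟩ < w⁻¹ ⟨i, Nat.lt_of_succ_lt h⟩ ∧
      invLen w = invLen (Equiv.swap (⟨i, Nat.lt_of_succ_lt h⟩ : Fin N) ⟨i + 1, h⟩ * w) + 1) := by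
  set x : Fin N := ⟨i, Nat.lt_of_succ_lt h⟩ with hxdef
  set y : Fin N := ⟨i + 1, h⟩ with hydef
  have hxy : x ≠ y := by simp [hxdef, hydef, Fin.ext_iff]
  rcases lt_trichotomy (w⁻¹ x) (w⁻¹ y) with hlt | heq | hgt
  · exact Or.inl ⟨hlt, step_A h w hlt⟩
  · exact absurd (w⁻¹.injective heq) hxy
  · refine Or.inr ⟨hgt, ?_⟩
    have hlt' : (Equiv.swap x y * w)⁻¹ x < (Equiv.swap x y * w)⁻¹ y := by
      rw [mul_inv_rev, Equiv.swap_inv]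
      simp only [Equiv.Perm.mul_apply, Equiv.swap_apply_left, Equiv.swap_apply_right]
      exact hgt
    have := step_A h (Equiv.swap x y * w) hlt'
    rw [← mul_assoc, Equiv.swap_mul_self, one_mul] at this
    exact this

lemma invLen_swap_le {i : ℕ} (h : i + 1 < N) (w : Equiv.Perm (Fin N)) :
    invLen (Equiv.swap (⟨i, Nat.lt_of_succ_lt h⟩ : Fin N) ⟨i + 1, h⟩ * w) ≤ invLen w + 1 := by
  rcases step_dichotomy h w with ⟨-, he⟩ | ⟨-, he⟩ <;> omega

lemma invLen_one : invLen (1 : Equiv.Perm (Fin N)) = 0 := by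
  unfold invLen
  rw [Finset.card_eq_zero, Finset.eq_empty_iff_forall_notMem]
  intro p hp
  rw [Finset.mem_filter] at hp
  simp only [Finset.mem_filter, Finset.mem_univ, true_and, Equiv.Perm.one_apply] at hp
  exact lt_asymm hp.1 hp.2

lemma invLen_wordProd_le (l : List ℕ) : invLen (wordProd N l) ≤ l.length := by
  induction l with
  | nil => simp [wordProd, invLen_one]
  | cons i t ih =>
    have hw : wordProd N (i :: t) = sT N i * wordProd N t := by
      simp [wordProd]
    rw [hw]
    by_cases h : i + 1 < N
    · have : sT N i = Equiv.swap (⟨i, Nat.lt_of_succ_lt h⟩ : Fin N) ⟨i + 1, h⟩ := by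
        unfold sT; rw [dif_pos h]
      rw [this]
      have := invLen_swap_le h (wordProd N t)
      simp only [List.length_cons]
      omega
    · have : sT N i = 1 := by unfold sT; rw [dif_neg h]
      rw [this, one_mul]
      simp only [List.length_cons]
      omega

/-- `w` fixes all indices `≥ n`. -/
def Fixes (n : ℕ) {N : ℕ} (w : Equiv.Perm (Fin N)) : Prop :=
  ∀ j : Fin N, n ≤ (j : ℕ) → w j = j

lemma fixes_of_closure {w : Equiv.Perm (Fin N)}
    (hw : w ∈ Subgroup.closure ((fun i => sT N i) '' {i : ℕ | i + 1 < n})) : Fixes n w := by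
  induction hw using Subgroup.closure_induction with
  | mem g hg =>
    obtain ⟨i, hi, rfl⟩ := hg
    intro j hj
    show sT N i j = j
    by_cases h : i + 1 < N
    · have hs : sT N i = Equiv.swap (⟨i, Nat.lt_of_succ_lt h⟩ : Fin N) ⟨i + 1, h⟩ := by
        unfold sT; rw [dif_pos h]
      rw [hs]
      refine Equiv.swap_apply_of_ne_of_ne ?_ ?_ <;>
        · intro hc
          have hin : i + 1 < n := hi
          rw [hc] at hj
          simp only [Fin.val_mk] at hj
          omega
    · have : sT N i = 1 := by unfold sT; rw [dif_neg h]
      rw [this]; rfl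
  | one => intro j _; rfl
  | mul g₁ g₂ _ _ h₁ h₂ =>
    intro j hj
    rw [Equiv.Perm.mul_apply, h₂ j hj, h₁ j hj]
  | inv g _ h =>
    intro j hj
    have := h j hj
    conv_lhs => rw [← this]
    rw [Equiv.Perm.coe_inv, Equiv.symm_apply_apply]

lemma letters_lt_of_reduced (hnN : n ≤ N) :
    ∀ (l : List ℕ) (w : Equiv.Perm (Fin N)), Fixes n w → (∀ i ∈ l, i + 1 < N) →
      wordProd N l = w → l.length = invLen w → ∀ i ∈ l, i + 1 < n := by
  intro l
  induction l with
  | nil => intro w _ _ _ _ i hi; simp at hi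
  | cons i t IH =>
    intro w hfix hbound hprod hlen
    have hiN : i + 1 < N := hbound i (List.mem_cons_self)
    set x : Fin N := ⟨i, Nat.lt_of_succ_lt hiN⟩ with hxdef
    set y : Fin N := ⟨i + 1, hiN⟩ with hydef
    have hs : sT N i = Equiv.swap x y := by unfold sT; rw [dif_pos hiN]
    have hw : w = Equiv.swap x y * wordProd N t := by
      rw [← hprod]; simp [wordProd, hs]
    have hwp : wordProd N t = Equiv.swap x y * w := by
      rw [hw, ← mul_assoc, Equiv.swap_mul_self, one_mul]
    have hle : invLen (Equiv.swap x y * w) ≤ t.length := by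
      rw [← hwp]; exact invLen_wordProd_le t
    have hlen' : t.length + 1 = invLen w := by simpa using hlen
    rcases step_dichotomy hiN w with ⟨-, hcon⟩ | ⟨hord, hdec⟩
    · rw [← hxdef, ← hydef] at hcon
      omega
    -- case B : w⁻¹ y < w⁻¹ x
    rw [← hxdef, ← hydef] at hord hdec
    have hinv : i + 1 < n := by
      set p := w⁻¹ y with hpdef
      set q := w⁻¹ x with hqdef
      have hwp' : w p = y := by simp [hpdef]
      have hwq : w q = x := by simp [hqdef]
      by_cases hpn : (p : ℕ) < n
      · -- then w p < n
        by_contra hcon2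
        have hwpn : n ≤ ((w p : Fin N) : ℕ) := by rw [hwp']; simp [hydef]; omega
        have := hfix (w p) hwpn
        have hpp : w p = p := w.injective this
        rw [hpp] at hwp'
        have : (p : ℕ) = i + 1 := by rw [hwp']
        omega
      · -- p ≥ n : contradiction
        push_neg at hpn
        have hfp := hfix p hpn
        rw [hwp'] at hfp
        -- y = p
        have hpy : (p : ℕ) = i + 1 := by rw [← hfp]
        have hqp : p < q := hord
        have hqn : n ≤ (q : ℕ) := by
          have := Fin.lt_def.mp hqp
          omega
        have hfq := hfix q hqn
        rw [hwq] at hfq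
        have : (q : ℕ) = i := by rw [← hfq]
        have := Fin.lt_def.mp hqp
        omega
    intro j hj
    rcases List.mem_cons.mp hj with rfl | hjt
    · exact hinv
    · -- apply IH to swap x y * w
      refine IH (Equiv.swap x y * w) ?_ (fun j' hj' => hbound j' (List.mem_cons_of_mem i hj'))
        hwp ?_ j hjt
      · intro j' hj'
        have hfj := hfix j' hj'
        rw [Equiv.Perm.mul_apply, hfj]
        refine Equiv.swap_apply_of_ne_of_ne ?_ ?_ <;>
          · intro hc
            rw [hc] at hj'
            simp [hxdef, hydef] at hj'
            omega
      · omega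
end SecD
section SecE
variable {n N : ℕ}

lemma extract (hnN : n ≤ N) :
    ∀ {ls : List (List ℕ)} {ws : List (Equiv.Perm (Fin N))},
      List.Forall₂ (fun l w => IsReducedWord N l w) ls ws → (∀ w ∈ ws, Fixes n w) →
      (∀ l ∈ ls, ∀ i ∈ l, i + 1 < n) ∧ (ls.map List.length).sum = (ws.map invLen).sum := by
  intro ls ws h
  induction h with
  | nil => simp
  | @cons l w ls' ws' hlw hrest ih =>
    intro hfix
    obtain ⟨hbound, hprod, hlen⟩ := hlw
    obtain ⟨ih1, ih2⟩ := ih fun w' hw' => hfix w' (List.mem_cons_of_mem w hw')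
    have hfw : Fixes n w := hfix w (List.mem_cons_self)
    constructor
    · intro l' hl'
      rcases List.mem_cons.mp hl' with rfl | hl't
      · exact letters_lt_of_reduced hnN l' w hfw hbound hprod hlen
      · exact ih1 l' hl't
    · simp only [List.map_cons, List.sum_cons, ih2, hlen]
end SecE

/-- with `N = n + a`, `w_1,…,w_m ∈ W_M` (the subgroup of `S_N` generated by
`s_1,…,s_{n−1}`), `Σ ℓ(w_i) = a = Σ a_i` (all `a_i > 0`), and
`n_i = ∏_{k=1}^{a_i} (ε_n − ε_{n+k})`, one has
`∂_{w_m}(n_m·⋯·∂_{w_1}(n_1)⋯) = ∂_{w_m}(ε_n^{a_m}·⋯·∂_{w_1}(ε_n^{a_1})⋯)`.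
Lists are ordered from the outermost to the innermost position. -/
theorem stmt8 (n : ℕ) (hn : 2 ≤ n) (asL : List ℕ) (hpos : ∀ x ∈ asL, 0 < x)
    (hm : asL ≠ []) (N : ℕ) (hN : N = n + asL.sum)
    (ws : List (Equiv.Perm (Fin N))) (ls : List (List ℕ))
    (hws : ∀ w ∈ ws, w ∈ Subgroup.closure ((fun i => sT N i) '' {i : ℕ | i + 1 < n}))
    (hred : List.Forall₂ (fun l w => IsReducedWord N l w) ls ws)
    (hlen : asL.length = ws.length)
    (hsum : (ws.map invLen).sum = asL.sum) :
    nest N ls (asL.map fun ai => ∏ k ∈ Finset.range ai, (xv N (n - 1) - xv N (n + k))) =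
      nest N ls (asL.map fun ai => (xv N (n - 1)) ^ ai) := by
  have hnN : n ≤ N := by omega
  have hfix : ∀ w ∈ ws, Fixes n w := fun w hw => fixes_of_closure (hws w hw)
  obtain ⟨hletters, hsums⟩ := extract hnN hred hfix
  have hlen₂ : ls.length = asL.length := by rw [hred.length_eq, ← hlen]
  have hx : QZ n 2 (xv N (n - 1)) := by
    unfold xv
    split
    · exact qz_X
    · exact qz_zero
  have hy : ∀ k, QZ n 1 (xv N (n + k)) := by
    intro k
    unfold xv
    split
    · refine qz_X0 ?_
      simp only [Fin.val_mk]
      omega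
    · exact qz_zero
  obtain ⟨-, -, h3⟩ := ML hnN (xv N (n - 1)) hx (fun k => xv N (n + k)) hy ls asL hlen₂ hletters
  have hAL : ((asL.sum : ℤ) - ((ls.map List.length).sum : ℤ)) = 0 := by
    rw [hsums, hsum]; ring
  rw [hAL] at h3
  exact sub_eq_zero.mp (qz_eq_zero h3 le_rfl)
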